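/- Let c : {0,…,N−1} → ℝ be a deterministic signal and let z(n) = d(n)·(c(n) + q(n)) for each n, where d(0),…,d(N−1), q(0),…,q(N−1) are mutually independent random variables, each d(n) is Bernoulli(p) (value 1 with probability p, value 0 with probability 1−p), and each q(n) takes values Δ/2 and −Δ/2 with probability 1/2 each. Then for every frequency index m ∈ {0,…,N−1}: E[Z(m)] = p·C(m) and E[|Z(m) − p·C(m)|²] = (p − p²)·Σ_{n=0}^{N−1} c(n)² + p·N·Δ²/4, where Z(m) = Σ_{n=0}^{N−1} z(n) e^{−2πi nm/N} and C(m) = Σ_{n=0}^{N−1} c(n) e^{−2πi nm/N}. -/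

import Mathlib

open MeasureTheory ProbabilityTheory

/-- The DFT kernel `e^{-2πi n m / N}`. -/
noncomputable def dftKernel (N : ℕ) (n m : Fin N) : ℂ :=
  Complex.exp (-2 * (Real.pi : ℂ) * Complex.I * ((n : ℕ) : ℂ) * ((m : ℕ) : ℂ) / ((N : ℕ) : ℂ))

private lemma integral_two_point {Ω : Type*} [MeasurableSpace Ω] (μ : Measure Ω) (X : Ω → ℝ)
    (hX : Measurable X) (wa wb : ENNReal) (hwa : wa ≠ ⊤) (hwb : wb ≠ ⊤) (a b : ℝ)
    (hlaw : Measure.map X μ = wa • Measure.dirac a + wb • Measure.dirac b)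
    (f : ℝ → ℝ) (hf : Measurable f) :
    ∫ ω, f (X ω) ∂μ = wa.toReal * f a + wb.toReal * f b := by
  have h1 : Integrable f (wa • Measure.dirac a) :=
    (((integrable_congr (MeasureTheory.ae_eq_dirac f)).2 (integrable_const _))).smul_measure hwa
  have h2 : Integrable f (wb • Measure.dirac b) :=
    (((integrable_congr (MeasureTheory.ae_eq_dirac f)).2 (integrable_const _))).smul_measure hwb
  rw [← integral_map hX.aemeasurable hf.aestronglyMeasurable, hlaw,
    integral_add_measure h1 h2, integral_smul_measure, integral_smul_measure,
    integral_dirac, integral_dirac, smul_eq_mul, smul_eq_mul]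

private lemma ae_two_values {Ω : Type*} [MeasurableSpace Ω] (μ : Measure Ω) (X : Ω → ℝ)
    (hX : Measurable X) (wa wb : ENNReal) (a b : ℝ)
    (hlaw : Measure.map X μ = wa • Measure.dirac a + wb • Measure.dirac b) :
    ∀ᵐ ω ∂μ, X ω = a ∨ X ω = b := by
  have hs : MeasurableSet ({a, b} : Set ℝ) :=
    (measurableSet_singleton b).insert a
  have h0 : μ (X ⁻¹' ({a, b} : Set ℝ)ᶜ) = 0 := by
    rw [← Measure.map_apply hX hs.compl, hlaw]
    simp [Measure.dirac_apply]
  rw [ae_iff]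
  have : {ω | ¬(X ω = a ∨ X ω = b)} = X ⁻¹' ({a, b} : Set ℝ)ᶜ := by
    ext ω; simp
  rw [this]; exact h0

/-- Factored missing-sampling model `z(n) = d(n)·(c(n) + q(n))`
with `d(0),…,d(N−1), q(0),…,q(N−1)` mutually independent, `d(n) ~ Bernoulli(p)`
and `q(n) = ±Δ/2` equiprobable. Then for every frequency index `m`:
`E[Z(m)] = p·C(m)` and
`E[|Z(m) − p·C(m)|²] = (p − p²)·Σ c(n)² + p·N·Δ²/4`. -/
theorem dm_factored_dft_mean_and_variance
    {Ω : Type*} [MeasurableSpace Ω] (μ : Measure Ω) [IsProbabilityMeasure μ]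
    (N : ℕ) (hN : 0 < N) (c : Fin N → ℝ) (p Δ : ℝ)
    (hp0 : 0 ≤ p) (hp1 : p ≤ 1) (hΔ : 0 < Δ)
    (d q : Fin N → Ω → ℝ)
    (hd : ∀ n, Measurable (d n)) (hq : ∀ n, Measurable (q n))
    (hindep : iIndepFun (Sum.elim d q : Fin N ⊕ Fin N → Ω → ℝ) μ)
    (hlawd : ∀ n, Measure.map (d n) μ =
      ENNReal.ofReal (1 - p) • Measure.dirac (0 : ℝ) +
      ENNReal.ofReal p • Measure.dirac (1 : ℝ))
    (hlawq : ∀ n, Measure.map (q n) μ =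
      (1 / 2 : ENNReal) • Measure.dirac (Δ / 2) +
      (1 / 2 : ENNReal) • Measure.dirac (-(Δ / 2)))
    (m : Fin N) :
    (∫ ω, ∑ n : Fin N, ((d n ω * (c n + q n ω) : ℝ) : ℂ) * dftKernel N n m ∂μ) =
      (p : ℂ) * ∑ n : Fin N, (c n : ℂ) * dftKernel N n m ∧
    (∫ ω, ‖(∑ n : Fin N, ((d n ω * (c n + q n ω) : ℝ) : ℂ) * dftKernel N n m) -
        (p : ℂ) * ∑ n : Fin N, (c n : ℂ) * dftKernel N n m‖ ^ 2 ∂μ) =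
      (p - p ^ 2) * (∑ n : Fin N, (c n) ^ 2) + p * N * Δ ^ 2 / 4 := by
  classical
  -- kernel has modulus one
  have habs : ∀ n : Fin N, ‖dftKernel N n m‖ = 1 := by
    intro n
    have hker : dftKernel N n m
        = Complex.exp (((-2 * Real.pi * (n : ℕ) * (m : ℕ) / (N : ℕ) : ℝ) : ℂ) * Complex.I) := by
      unfold dftKernel
      congr 1
      push_cast
      ring
    rw [hker, Complex.norm_exp_ofReal_mul_I]
  have hee : ∀ n : Fin N, (dftKernel N n m * (starRingEnd ℂ) (dftKernel N n m)).re = 1 := by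
    intro n
    rw [Complex.mul_conj, Complex.ofReal_re, ← Complex.sq_norm, habs n, one_pow]
  -- basic moments
  have Ed : ∀ n, ∫ ω, d n ω ∂μ = p := by
    intro n
    have := integral_two_point μ (d n) (hd n) _ _ ENNReal.ofReal_ne_top ENNReal.ofReal_ne_top
      0 1 (hlawd n) id measurable_id
    simpa [ENNReal.toReal_ofReal hp0] using this
  have Eq0 : ∀ n, ∫ ω, q n ω ∂μ = 0 := by
    intro n
    have := integral_two_point μ (q n) (hq n) (1/2) (1/2) (by simp) (by simp)
      (Δ/2) (-(Δ/2)) (hlawq n) id measurable_id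
    simp only [id] at this
    rw [this]
    ring
  -- a.e. values
  have hdv : ∀ n, ∀ᵐ ω ∂μ, d n ω = 0 ∨ d n ω = 1 :=
    fun n => ae_two_values μ (d n) (hd n) _ _ 0 1 (hlawd n)
  have hqv : ∀ n, ∀ᵐ ω ∂μ, q n ω = Δ/2 ∨ q n ω = -(Δ/2) :=
    fun n => ae_two_values μ (q n) (hq n) _ _ (Δ/2) (-(Δ/2)) (hlawq n)
  -- integrability helper
  have hint : ∀ (f : Ω → ℝ) (C : ℝ), Measurable f → (∀ᵐ ω ∂μ, |f ω| ≤ C) → Integrable f μ := by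
    intro f C hf hb
    exact Integrable.mono' (integrable_const C) hf.aestronglyMeasurable
      (by simpa [Real.norm_eq_abs] using hb)
  have hdb : ∀ n, ∀ᵐ ω ∂μ, |d n ω| ≤ 1 := by
    intro n
    filter_upwards [hdv n] with ω h
    rcases h with h | h <;> simp [h]
  have hqb : ∀ n, ∀ᵐ ω ∂μ, |q n ω| ≤ Δ/2 := by
    intro n
    filter_upwards [hqv n] with ω h
    rcases h with h | h
    · rw [h, abs_of_nonneg (by linarith)]
    · rw [h, abs_neg, abs_of_nonneg (by linarith)]
  have hdint : ∀ n, Integrable (d n) μ := fun n => hint _ 1 (hd n) (hdb n)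
  have hqint : ∀ n, Integrable (q n) μ := fun n => hint _ (Δ/2) (hq n) (hqb n)
  have hdqint : ∀ n, Integrable (fun ω => d n ω * q n ω) μ := by
    intro n
    refine hint _ (Δ/2) ((hd n).mul (hq n)) ?_
    filter_upwards [hdb n, hqb n] with ω h1 h2
    calc |d n ω * q n ω| = |d n ω| * |q n ω| := abs_mul _ _
      _ ≤ 1 * (Δ/2) := mul_le_mul h1 h2 (abs_nonneg _) zero_le_one
      _ = Δ/2 := one_mul _
  -- centered variables
  set Y : Fin N → Ω → ℝ := fun n ω => d n ω * (c n + q n ω) - p * c n with hY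
  have hYm : ∀ n, Measurable (Y n) :=
    fun n => ((hd n).mul (measurable_const.add (hq n))).sub measurable_const
  have hYb : ∀ n, ∀ᵐ ω ∂μ, |Y n ω| ≤ (|c n| + Δ/2) + |p * c n| := by
    intro n
    filter_upwards [hdb n, hqb n] with ω h1 h2
    have e1 : |Y n ω| ≤ |d n ω * (c n + q n ω)| + |p * c n| := by
      simpa [hY, sub_eq_add_neg, abs_neg] using
        abs_add_le (d n ω * (c n + q n ω)) (-(p * c n))
    have e2 : |d n ω * (c n + q n ω)| ≤ |c n| + Δ/2 := by
      rw [abs_mul]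
      calc |d n ω| * |c n + q n ω| ≤ 1 * (|c n| + Δ/2) := by
            refine mul_le_mul h1 ?_ (abs_nonneg _) zero_le_one
            calc |c n + q n ω| ≤ |c n| + |q n ω| := abs_add_le _ _
              _ ≤ |c n| + Δ/2 := by linarith
        _ = |c n| + Δ/2 := one_mul _
    linarith
  have hYint : ∀ n, Integrable (Y n) μ := fun n => hint _ _ (hYm n) (hYb n)
  have hYYint : ∀ n k, Integrable (fun ω => Y n ω * Y k ω) μ := by
    intro n k
    refine hint _ (((|c n| + Δ/2) + |p * c n|) * ((|c k| + Δ/2) + |p * c k|))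
      ((hYm n).mul (hYm k)) ?_
    filter_upwards [hYb n, hYb k] with ω h1 h2
    rw [abs_mul]
    exact mul_le_mul h1 h2 (abs_nonneg _) (le_trans (abs_nonneg _) h1)
  -- independence of d n and q n
  have hind_dq : ∀ n, IndepFun (d n) (q n) μ := by
    intro n
    have := hindep.indepFun (show (Sum.inl n : Fin N ⊕ Fin N) ≠ Sum.inr n by simp)
    simpa using this
  have Edq : ∀ n, ∫ ω, d n ω * q n ω ∂μ = 0 := by
    intro n
    rw [(hind_dq n).integral_fun_mul_eq_mul_integral (hd n).aestronglyMeasurable (hq n).aestronglyMeasurable,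
      Ed n, Eq0 n, mul_zero]
  -- mean of X n
  have hXeq : ∀ n, (fun ω => d n ω * (c n + q n ω))
      = fun ω => d n ω * c n + d n ω * q n ω := by
    intro n; funext ω; ring
  have hXint : ∀ n, Integrable (fun ω => d n ω * (c n + q n ω)) μ := by
    intro n
    rw [hXeq n]
    exact ((hdint n).mul_const _).add (hdqint n)
  have EX : ∀ n, ∫ ω, d n ω * (c n + q n ω) ∂μ = p * c n := by
    intro n
    rw [hXeq n, integral_add ((hdint n).mul_const _) (hdqint n),
      integral_mul_const, Ed n, Edq n]
    ring
  have EY : ∀ n, ∫ ω, Y n ω ∂μ = 0 := by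
    intro n
    have : ∫ ω, Y n ω ∂μ = ∫ ω, (d n ω * (c n + q n ω) - p * c n) ∂μ := rfl
    rw [this, integral_sub (hXint n) (integrable_const _), EX n, integral_const]
    simp
  -- second moment of Y n
  have EYY : ∀ n, ∫ ω, Y n ω * Y n ω ∂μ = (p - p^2) * c n ^ 2 + p * Δ^2 / 4 := by
    intro n
    have hae : (fun ω => Y n ω * Y n ω) =ᵐ[μ] fun ω =>
        ((c n^2 + Δ^2/4 - 2*p*c n^2) * d n ω + (2*c n - 2*p*c n) * (d n ω * q n ω))
          + p^2 * c n^2 := by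
      filter_upwards [hdv n, hqv n] with ω h1 h2
      simp only [hY]
      rcases h1 with h1 | h1 <;> rcases h2 with h2 | h2 <;> rw [h1, h2] <;> ring
    have I1 : Integrable (fun ω => (c n^2 + Δ^2/4 - 2*p*c n^2) * d n ω) μ :=
      (hdint n).const_mul _
    have I2 : Integrable (fun ω => (2*c n - 2*p*c n) * (d n ω * q n ω)) μ :=
      (hdqint n).const_mul _
    have I12 : Integrable (fun ω => (c n^2 + Δ^2/4 - 2*p*c n^2) * d n ω
        + (2*c n - 2*p*c n) * (d n ω * q n ω)) μ := I1.add I2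
    rw [integral_congr_ae hae, integral_add I12 (integrable_const _), integral_add I1 I2,
      integral_const_mul, integral_const_mul, Ed n, Edq n, integral_const]
    simp only [probReal_univ, measure_univ, ENNReal.toReal_one, smul_eq_mul, one_mul, mul_zero, add_zero]
    ring
  -- vanishing cross moments
  have EYYne : ∀ n k, n ≠ k → ∫ ω, Y n ω * Y k ω ∂μ = 0 := by
    intro n k hnk
    have hmeas : ∀ i : Fin N ⊕ Fin N, Measurable ((Sum.elim d q : Fin N ⊕ Fin N → Ω → ℝ) i) := by
      rintro (i | i)
      · exact hd i
      · exact hq i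
    have hpair : IndepFun (fun ω => (d n ω, q n ω)) (fun ω => (d k ω, q k ω)) μ := by
      have := hindep.indepFun_prodMk_prodMk hmeas
        (Sum.inl n) (Sum.inr n) (Sum.inl k) (Sum.inr k)
        (by simp [hnk]) (by simp) (by simp) (by simp [hnk])
      simpa using this
    have hφ : ∀ j : Fin N, Measurable (fun x : ℝ × ℝ => x.1 * (c j + x.2) - p * c j) :=
      fun j => (measurable_fst.mul (measurable_const.add measurable_snd)).sub measurable_const
    have hYind : IndepFun (Y n) (Y k) μ := hpair.comp (hφ n) (hφ k)
    rw [hYind.integral_fun_mul_eq_mul_integral (hYm n).aestronglyMeasurable (hYm k).aestronglyMeasurable,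
      EY n, zero_mul]
  constructor
  · -- mean
    have h1 : ∀ n ∈ Finset.univ,
        Integrable (fun ω => ((d n ω * (c n + q n ω) : ℝ) : ℂ) * dftKernel N n m) μ :=
      fun n _ => (hXint n).ofReal.mul_const _
    rw [integral_finset_sum _ h1, Finset.mul_sum]
    refine Finset.sum_congr rfl fun n _ => ?_
    have EXC : ∫ ω, ((d n ω * (c n + q n ω) : ℝ) : ℂ) ∂μ
        = ((p * c n : ℝ) : ℂ) := by
      rw [show (∫ ω, ((d n ω * (c n + q n ω) : ℝ) : ℂ) ∂μ)
          = (((∫ ω, d n ω * (c n + q n ω) ∂μ : ℝ)) : ℂ) from integral_ofReal, EX n]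
    rw [integral_mul_const, EXC]
    push_cast
    ring
  · -- variance
    have hrw : ∀ ω, (‖(∑ n : Fin N, ((d n ω * (c n + q n ω) : ℝ) : ℂ) * dftKernel N n m) -
        (p : ℂ) * ∑ n : Fin N, (c n : ℂ) * dftKernel N n m‖) ^ 2
        = ∑ n : Fin N, ∑ k : Fin N,
            Y n ω * Y k ω * (dftKernel N n m * (starRingEnd ℂ) (dftKernel N k m)).re := by
      intro ω
      have hw : (∑ n : Fin N, ((d n ω * (c n + q n ω) : ℝ) : ℂ) * dftKernel N n m) -
          (p : ℂ) * ∑ n : Fin N, (c n : ℂ) * dftKernel N n m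
          = ∑ n : Fin N, ((Y n ω : ℝ) : ℂ) * dftKernel N n m := by
        rw [Finset.mul_sum, ← Finset.sum_sub_distrib]
        refine Finset.sum_congr rfl fun n _ => ?_
        simp only [hY]
        push_cast
        ring
      rw [hw, Complex.sq_norm]
      have h2 : ((Complex.normSq (∑ n : Fin N, ((Y n ω : ℝ) : ℂ) * dftKernel N n m) : ℝ) : ℂ).re
          = Complex.normSq (∑ n : Fin N, ((Y n ω : ℝ) : ℂ) * dftKernel N n m) :=
        Complex.ofReal_re _
      rw [← h2, ← Complex.mul_conj]
      have h3 : (∑ n : Fin N, ((Y n ω : ℝ) : ℂ) * dftKernel N n m) *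
          (starRingEnd ℂ) (∑ k : Fin N, ((Y k ω : ℝ) : ℂ) * dftKernel N k m)
          = ∑ n : Fin N, ∑ k : Fin N,
            (((Y n ω * Y k ω : ℝ)) : ℂ) * (dftKernel N n m * (starRingEnd ℂ) (dftKernel N k m)) := by
        rw [map_sum, Finset.sum_mul_sum]
        refine Finset.sum_congr rfl fun n _ => Finset.sum_congr rfl fun k _ => ?_
        rw [map_mul, Complex.conj_ofReal]
        push_cast
        ring
      rw [h3, Complex.re_sum]
      refine Finset.sum_congr rfl fun n _ => ?_
      rw [Complex.re_sum]
      refine Finset.sum_congr rfl fun k _ => ?_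
      rw [Complex.re_ofReal_mul]
    rw [integral_congr_ae (Filter.Eventually.of_forall hrw)]
    have hintsum : ∀ n ∈ Finset.univ, Integrable (fun ω => ∑ k : Fin N,
        Y n ω * Y k ω * (dftKernel N n m * (starRingEnd ℂ) (dftKernel N k m)).re) μ :=
      fun n _ => integrable_finset_sum _ (fun k _ => (hYYint n k).mul_const _)
    rw [integral_finset_sum _ hintsum]
    have hstep : ∀ n : Fin N, ∫ ω, (∑ k : Fin N,
        Y n ω * Y k ω * (dftKernel N n m * (starRingEnd ℂ) (dftKernel N k m)).re) ∂μ
        = (p - p^2) * c n ^ 2 + p * Δ^2 / 4 := by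
      intro n
      rw [integral_finset_sum _ (fun k _ => (hYYint n k).mul_const _)]
      have : ∀ k : Fin N, ∫ ω, Y n ω * Y k ω *
          (dftKernel N n m * (starRingEnd ℂ) (dftKernel N k m)).re ∂μ
          = (∫ ω, Y n ω * Y k ω ∂μ) *
            (dftKernel N n m * (starRingEnd ℂ) (dftKernel N k m)).re :=
        fun k => integral_mul_const _ _
      simp only [this]
      rw [Finset.sum_eq_single n
        (fun k _ hk => by rw [EYYne n k (fun h => hk h.symm), zero_mul])
        (fun h => absurd (Finset.mem_univ n) h)]
      rw [EYY n, hee n, mul_one]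
    simp only [hstep]
    rw [Finset.sum_add_distrib, ← Finset.mul_sum, Finset.sum_const, Finset.card_univ,
      Fintype.card_fin, nsmul_eq_mul]
    ring
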